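/- Let R ⊆ ℝ² be a compact convex set and suppose B(m,r) with r > 0 is a maximal inscribed disk of R, i.e., B(m,r) ⊆ R and every closed disk contained in R has radius at most r. Then there exist unit vectors v₁, v₂, v₃ ∈ ℝ² such that R is contained in the union of the three slabs {x ∈ ℝ² : −r ≤ ⟨x − m, vᵢ⟩ ≤ r} for i = 1, 2, 3. -/

import Mathlib

open scoped RealInnerProductSpace

private lemma sum_range_embedding' {ι : Type*} [Fintype ι] {n : ℕ} (e : ι ↪ Fin n)
    {M : Type*} [AddCommMonoid M] (F : Fin n → M)
    (h0 : ∀ j, j ∉ Set.range e → F j = 0) : ∑ j, F j = ∑ i, F (e i) := by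
  classical
  rw [← Finset.sum_map Finset.univ e F]
  refine (Finset.sum_subset (Finset.subset_univ _) ?_).symm
  intro j _ hj
  apply h0
  simp only [Finset.mem_map, Finset.mem_univ, true_and, not_exists] at hj
  rintro ⟨i, rfl⟩
  exact hj i rfl

/-- A compact convex planar region with maximal inscribed disk `B(m, r)` is contained in
the union of three slabs of width `2r` through `m`. -/
theorem convex_subset_three_slabs
    (R : Set (EuclideanSpace ℝ (Fin 2))) (hR : IsCompact R) (hconv : Convex ℝ R)
    (m : EuclideanSpace ℝ (Fin 2)) (r : ℝ) (hr : 0 < r)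
    (hsub : Metric.closedBall m r ⊆ R)
    (hmax : ∀ (m' : EuclideanSpace ℝ (Fin 2)) (r' : ℝ),
      Metric.closedBall m' r' ⊆ R → r' ≤ r) :
    ∃ v₁ v₂ v₃ : EuclideanSpace ℝ (Fin 2), ‖v₁‖ = 1 ∧ ‖v₂‖ = 1 ∧ ‖v₃‖ = 1 ∧
      R ⊆ {x | -r ≤ ⟪x - m, v₁⟫ ∧ ⟪x - m, v₁⟫ ≤ r} ∪
          {x | -r ≤ ⟪x - m, v₂⟫ ∧ ⟪x - m, v₂⟫ ≤ r} ∪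
          {x | -r ≤ ⟪x - m, v₃⟫ ∧ ⟪x - m, v₃⟫ ≤ r} := by
  classical
  have hmR : m ∈ R := hsub (Metric.mem_closedBall_self hr.le)
  -- the support function (relative to `m`)
  set f : EuclideanSpace ℝ (Fin 2) → ℝ := fun u => sSup ((fun x => ⟪x - m, u⟫) '' R) with hfdef
  have hcont_inner : ∀ u, Continuous fun x : EuclideanSpace ℝ (Fin 2) => ⟪x - m, u⟫ :=
    fun u => (continuous_id.sub continuous_const).inner continuous_const
  have hbdd : ∀ u, BddAbove ((fun x => ⟪x - m, u⟫) '' R) :=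
    fun u => (hR.image (hcont_inner u)).bddAbove
  have hne_img : ∀ u, ((fun x => ⟪x - m, u⟫) '' R).Nonempty := fun u => ⟨_, ⟨m, hmR, rfl⟩⟩
  have hfle : ∀ u, ∀ x ∈ R, ⟪x - m, u⟫ ≤ f u := fun u x hx => le_csSup (hbdd u) ⟨x, hx, rfl⟩
  have hfge : ∀ u, ‖u‖ = 1 → r ≤ f u := by
    intro u hu
    have hp : m + r • u ∈ R := hsub (by
      simp [Metric.mem_closedBall, dist_eq_norm, norm_smul, hu, abs_of_pos hr])
    have h := hfle u _ hp
    have heq : ⟪(m + r • u) - m, u⟫ = r * (‖u‖ * ‖u‖) := by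
      rw [add_sub_cancel_left, real_inner_smul_left, real_inner_self_eq_norm_mul_norm]
    rw [heq, hu] at h
    linarith
  -- a bound on `R`
  obtain ⟨D, hD⟩ : ∃ D, ∀ x ∈ R, ‖x - m‖ ≤ D := by
    obtain ⟨ρ, hρ⟩ := hR.isBounded.subset_closedBall m
    exact ⟨ρ, fun x hx => by simpa [dist_eq_norm] using hρ hx⟩
  have hD0 : 0 ≤ D := by simpa using hD m hmR
  -- Lipschitz estimate for f
  have hfdiff : ∀ u v, f u ≤ f v + D * ‖u - v‖ := by
    intro u v
    apply csSup_le (hne_img u)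
    rintro _ ⟨x, hx, rfl⟩
    have h2 : ⟪x - m, u - v⟫ ≤ D * ‖u - v‖ :=
      le_trans (real_inner_le_norm _ _)
        (mul_le_mul_of_nonneg_right (hD x hx) (norm_nonneg _))
    have h3 := hfle v x hx
    have h4 : ⟪x - m, u⟫ - ⟪x - m, v⟫ = ⟪x - m, u - v⟫ := (inner_sub_right _ _ _).symm
    linarith
  have hfcont : Continuous f := by
    have : LipschitzWith (Real.toNNReal D) f := by
      apply LipschitzWith.of_dist_le_mul
      intro u v
      rw [Real.coe_toNNReal D hD0, Real.dist_eq, dist_eq_norm]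
      have h1 := hfdiff u v
      have h2 := hfdiff v u
      rw [norm_sub_rev v u] at h2
      rw [abs_le]; constructor <;> linarith
    exact this.continuous
  -- membership criterion via separation
  have hmem : ∀ x, (∀ u, ‖u‖ = 1 → ⟪x - m, u⟫ ≤ f u) → x ∈ R := by
    intro x hx
    by_contra hxR
    obtain ⟨ℓ, c, hc1, hc2⟩ := geometric_hahn_banach_closed_point hconv hR.isClosed hxR
    set v := (InnerProductSpace.toDual ℝ (EuclideanSpace ℝ (Fin 2))).symm ℓ with hv
    have hvapp : ∀ y, ⟪v, y⟫ = ℓ y := fun y => InnerProductSpace.toDual_symm_apply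
    have hvne : v ≠ 0 := by
      intro h0
      have hm' : ℓ m = 0 := by rw [← hvapp, h0, inner_zero_left]
      have hx' : ℓ x = 0 := by rw [← hvapp, h0, inner_zero_left]
      have := hc1 m hmR
      linarith
    have hvpos : (0:ℝ) < ‖v‖ := norm_pos_iff.mpr hvne
    set u := ‖v‖⁻¹ • v with hu'
    have hu : ‖u‖ = 1 := by
      rw [hu', norm_smul, norm_inv, norm_norm, inv_mul_cancel₀ (ne_of_gt hvpos)]
    have hvapp' : ∀ y, ⟪y, v⟫ = ℓ y := fun y => by rw [real_inner_comm]; exact hvapp y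
    have hval : ∀ y : EuclideanSpace ℝ (Fin 2), ⟪y - m, u⟫ = ‖v‖⁻¹ * (ℓ y - ℓ m) := by
      intro y
      rw [hu', real_inner_smul_right, inner_sub_left, hvapp', hvapp']
    have hfu : f u ≤ ‖v‖⁻¹ * (c - ℓ m) := by
      apply csSup_le (hne_img u)
      rintro _ ⟨y, hy, rfl⟩
      show ⟪y - m, u⟫ ≤ ‖v‖⁻¹ * (c - ℓ m)
      rw [hval y]
      have := hc1 y hy
      apply mul_le_mul_of_nonneg_left (by linarith) (inv_nonneg.mpr hvpos.le)
    have hkey := hx u hu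
    rw [hval x] at hkey
    have : ‖v‖⁻¹ * (c - ℓ m) < ‖v‖⁻¹ * (ℓ x - ℓ m) :=
      mul_lt_mul_of_pos_left (by linarith) (inv_pos.mpr hvpos)
    linarith
  -- the set of tight directions
  set Tight : Set (EuclideanSpace ℝ (Fin 2)) := {u | ‖u‖ = 1 ∧ f u = r} with hTdef
  have hTclosed : IsClosed Tight := by
    have : Tight = (fun u : EuclideanSpace ℝ (Fin 2) => ‖u‖) ⁻¹' {1} ∩ f ⁻¹' {r} := by
      ext u; simp [hTdef]
    rw [this]
    exact (isClosed_singleton.preimage continuous_norm).inter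
      (isClosed_singleton.preimage hfcont)
  have hTcomp : IsCompact Tight := by
    refine (isCompact_closedBall (0 : EuclideanSpace ℝ (Fin 2)) 1).of_isClosed_subset hTclosed ?_
    intro u hu
    simp only [Metric.mem_closedBall, dist_zero_right]
    exact le_of_eq hu.1
  -- the ball-growing argument: no unit vector can strictly separate Tight from 0
  have hgrow : ∀ w : EuclideanSpace ℝ (Fin 2), ‖w‖ = 1 → ∀ δ : ℝ, 0 < δ → δ ≤ 1 →
      (∀ u ∈ Tight, δ ≤ ⟪w, u⟫) → False := by
    intro w hw δ hδ0 hδ1 hsep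
    set S' : Set (EuclideanSpace ℝ (Fin 2)) := {u | ‖u‖ = 1 ∧ ⟪w, u⟫ ≤ δ/2} with hS'def
    have hS'closed : IsClosed S' := by
      have : S' = (fun u : EuclideanSpace ℝ (Fin 2) => ‖u‖) ⁻¹' {1} ∩
          (fun u => ⟪w, u⟫) ⁻¹' (Set.Iic (δ/2)) := by
        ext u; simp [hS'def]
      rw [this]
      exact (isClosed_singleton.preimage continuous_norm).inter
        (isClosed_Iic.preimage (continuous_const.inner continuous_id))
    have hS'comp : IsCompact S' := by
      refine (isCompact_closedBall (0 : EuclideanSpace ℝ (Fin 2)) 1).of_isClosed_subset hS'closed ?_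
      intro u hu
      simp only [Metric.mem_closedBall, dist_zero_right]
      exact le_of_eq hu.1
    obtain ⟨c0, hc00, hc0⟩ : ∃ c0 : ℝ, 0 < c0 ∧ ∀ u ∈ S', r + c0 ≤ f u := by
      rcases S'.eq_empty_or_nonempty with hE | hNE
      · exact ⟨1, one_pos, by simp [hE]⟩
      · obtain ⟨u0, hu0S, hmin⟩ := hS'comp.exists_isMinOn hNE hfcont.continuousOn
        have hlt : r < f u0 := by
          rcases lt_or_eq_of_le (hfge u0 hu0S.1) with h | h
          · exact h
          · exfalso
            have : u0 ∈ Tight := ⟨hu0S.1, h.symm⟩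
            have := hsep u0 this
            have := hu0S.2
            linarith
        exact ⟨f u0 - r, by linarith, fun u hu => by
          have h9 := isMinOn_iff.mp hmin u hu; linarith⟩
    set ε : ℝ := c0 / 2 with hεdef
    have hε0 : 0 < ε := by positivity
    set r' : ℝ := r + ε * δ / 2 with hr'def
    have hball : Metric.closedBall (m - ε • w) r' ⊆ R := by
      intro y hy
      apply hmem
      intro u hu
      have hy' : ‖y - (m - ε • w)‖ ≤ r' := by
        rwa [Metric.mem_closedBall, dist_eq_norm] at hy
      have h1 : ⟪y - (m - ε • w), u⟫ ≤ r' :=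
        le_trans (real_inner_le_norm _ _) (by rw [hu, mul_one]; exact hy')
      have hdec : y - m = (y - (m - ε • w)) + (-ε) • w := by module
      have h2 : ⟪y - m, u⟫ = ⟪y - (m - ε • w), u⟫ - ε * ⟪w, u⟫ := by
        rw [hdec, inner_add_left, real_inner_smul_left]; ring
      have h3 : r' ≤ f u + ε * ⟪w, u⟫ := by
        rcases le_or_gt (δ/2) ⟪w, u⟫ with h | h
        · have := hfge u hu
          rw [hr'def]; nlinarith
        · have hu' : u ∈ S' := ⟨hu, h.le⟩
          have h4 := hc0 u hu'
          have h5 : |⟪w, u⟫| ≤ 1 := by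
            have := abs_real_inner_le_norm w u
            rwa [hw, hu, one_mul] at this
          have h6 : -1 ≤ ⟪w, u⟫ := neg_le_of_abs_le h5
          rw [hr'def, hεdef]; nlinarith
      linarith
    have := hmax _ _ hball
    rw [hr'def] at this
    nlinarith
  -- Tight is nonempty and 0 lies in the closure of its convex hull
  have hTne : Tight.Nonempty := by
    rcases Tight.eq_empty_or_nonempty with hE | hNE
    · exfalso
      refine hgrow (EuclideanSpace.single 0 1) ?_ 1 one_pos le_rfl (by simp [hE])
      simp [EuclideanSpace.norm_single]
    · exact hNE
  have h0cl : (0 : EuclideanSpace ℝ (Fin 2)) ∈ closure (convexHull ℝ Tight) := by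
    by_contra h0
    obtain ⟨ℓ, c, hc1, hc2⟩ := geometric_hahn_banach_point_closed
      ((convex_convexHull ℝ Tight).closure) isClosed_closure h0
    have hc1' : (0:ℝ) < c := by simpa using hc1
    obtain ⟨u0, hu0⟩ := hTne
    have hmemcl : ∀ u ∈ Tight, c < ℓ u := fun u hu =>
      hc2 u (subset_closure (subset_convexHull ℝ Tight hu))
    set v := (InnerProductSpace.toDual ℝ (EuclideanSpace ℝ (Fin 2))).symm ℓ with hv
    have hvapp : ∀ y, ⟪v, y⟫ = ℓ y := fun y => InnerProductSpace.toDual_symm_apply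
    have hvne : v ≠ 0 := by
      intro h0'
      have : ℓ u0 = 0 := by rw [← hvapp, h0', inner_zero_left]
      have := hmemcl u0 hu0
      linarith
    have hvpos : (0:ℝ) < ‖v‖ := norm_pos_iff.mpr hvne
    set w := ‖v‖⁻¹ • v with hwdef
    have hw : ‖w‖ = 1 := by
      rw [hwdef, norm_smul, norm_inv, norm_norm, inv_mul_cancel₀ (ne_of_gt hvpos)]
    set δ : ℝ := min (c / ‖v‖) 1 with hδdef
    have hδ0 : 0 < δ := lt_min (div_pos hc1' hvpos) one_pos
    refine hgrow w hw δ hδ0 (min_le_right _ _) ?_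
    intro u hu
    have h1 : ⟪w, u⟫ = ‖v‖⁻¹ * ℓ u := by rw [hwdef, real_inner_smul_left, hvapp]
    have h2 := hmemcl u hu
    calc δ ≤ c / ‖v‖ := min_le_left _ _
      _ = ‖v‖⁻¹ * c := by rw [div_eq_inv_mul]
      _ ≤ ‖v‖⁻¹ * ℓ u := mul_le_mul_of_nonneg_left h2.le (inv_nonneg.mpr hvpos.le)
      _ = ⟪w, u⟫ := h1.symm
  -- extract a convex combination of at most three tight directions giving 0
  obtain ⟨W, U, hW0, hW1, hUT, hsum0⟩ :
      ∃ (W : Fin 3 → ℝ) (U : Fin 3 → EuclideanSpace ℝ (Fin 2)),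
        (∀ i, 0 ≤ W i) ∧ ∑ i, W i = 1 ∧ (∀ i, U i ∈ Tight) ∧
          ∑ i, W i • U i = 0 := by
    set T : Set ((Fin 3 → ℝ) × (Fin 3 → EuclideanSpace ℝ (Fin 2))) :=
      stdSimplex ℝ (Fin 3) ×ˢ Set.univ.pi (fun _ => Tight) with hTdef'
    set g : (Fin 3 → ℝ) × (Fin 3 → EuclideanSpace ℝ (Fin 2)) → EuclideanSpace ℝ (Fin 2) :=
      fun p => ∑ i, p.1 i • p.2 i with hgdef
    have hTcomp' : IsCompact T :=
      (isCompact_stdSimplex ℝ (Fin 3)).prod (isCompact_univ_pi fun _ => hTcomp)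
    have hgcont : Continuous g := by
      apply continuous_finset_sum
      intro i _
      exact ((continuous_apply i).comp continuous_fst).smul
        ((continuous_apply i).comp continuous_snd)
    have himg : convexHull ℝ Tight ⊆ g '' T := by
      intro x hx
      obtain ⟨ι, hι, z, wgt, hz, haff, hwpos, hw1, hsum⟩ :=
        eq_pos_convex_span_of_mem_convexHull hx
      have hιne : Nonempty ι := by
        by_contra h
        have : IsEmpty ι := not_nonempty_iff.mp h
        rw [Finset.univ_eq_empty, Finset.sum_empty] at hw1
        exact one_ne_zero hw1.symm
      have hcard : Fintype.card ι ≤ 3 := by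
        have h1 := haff.card_le_finrank_succ
        have h2 : Module.finrank ℝ (vectorSpan ℝ (Set.range z)) ≤ 2 := by
          have := Submodule.finrank_le (vectorSpan ℝ (Set.range z))
          rwa [finrank_euclideanSpace_fin] at this
        omega
      obtain ⟨e⟩ : Nonempty (ι ↪ Fin 3) := by
        apply Function.Embedding.nonempty_of_card_le
        simpa using hcard
      set gl : Fin 3 → ι := fun j => Function.invFun e j with hgl_def
      have hgl : ∀ i, gl (e i) = i := fun i => Function.leftInverse_invFun e.injective i
      set W' : Fin 3 → ℝ := fun j => if j ∈ Set.range e then wgt (gl j) else 0 with hW'def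
      set U' : Fin 3 → EuclideanSpace ℝ (Fin 2) := fun j => z (gl j) with hU'def
      have hWe : ∀ i, W' (e i) = wgt i := by
        intro i
        simp only [hW'def, Set.mem_range, exists_apply_eq_apply, if_true, hgl]
      have hW'0 : ∀ j, j ∉ Set.range e → W' j = 0 := by
        intro j hj; simp only [hW'def, hj, if_false]
      refine ⟨(W', U'), ⟨?_, ?_⟩, ?_⟩
      · refine ⟨?_, ?_⟩
        · intro j
          by_cases hj : j ∈ Set.range e
          · simp only [hW'def, hj, if_true]; exact (hwpos _).le
          · simp only [hW'def, hj, if_false, le_refl]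
        · show ∑ j, W' j = 1
          rw [sum_range_embedding' e W' hW'0]
          simp only [hWe]
          exact hw1
      · intro j _
        exact hz ⟨gl j, rfl⟩
      · show ∑ j, W' j • U' j = x
        rw [sum_range_embedding' e (fun j => W' j • U' j)
          (fun j hj => by show W' j • U' j = 0; rw [hW'0 j hj, zero_smul])]
        simp only [hWe, hU'def, hgl]
        exact hsum
    have hcl : closure (convexHull ℝ Tight) ⊆ g '' T :=
      closure_minimal himg (hTcomp'.image hgcont).isClosed
    obtain ⟨⟨W, U⟩, ⟨hWstd, hUpi⟩, hsum⟩ := hcl h0cl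
    exact ⟨W, U, hWstd.1, hWstd.2, fun i => hUpi i (Set.mem_univ i), hsum⟩
  -- conclusion
  refine ⟨U 0, U 1, U 2, (hUT 0).1, (hUT 1).1, (hUT 2).1, ?_⟩
  intro x hx
  by_contra hmemx
  simp only [Set.mem_union, Set.mem_setOf_eq, not_or, not_and_or, not_le] at hmemx
  have hub : ∀ i, ⟪x - m, U i⟫ ≤ r := fun i => by
    have := hfle (U i) x hx
    rw [(hUT i).2] at this
    exact this
  have hlb : ∀ i : Fin 3, ⟪x - m, U i⟫ < -r := by
    intro i
    fin_cases i
    · rcases hmemx.1.1 with h | h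
      · exact h
      · exact absurd (hub 0) (not_le.mpr h)
    · rcases hmemx.1.2 with h | h
      · exact h
      · exact absurd (hub 1) (not_le.mpr h)
    · rcases hmemx.2 with h | h
      · exact h
      · exact absurd (hub 2) (not_le.mpr h)
  obtain ⟨i0, hi0⟩ : ∃ i, 0 < W i := by
    by_contra h
    push_neg at h
    have hz : ∀ i, W i = 0 := fun i => le_antisymm (h i) (hW0 i)
    rw [Finset.sum_congr rfl (fun i _ => hz i), Finset.sum_const_zero] at hW1
    exact one_ne_zero hW1.symm
  have hzero : (0:ℝ) = ∑ i, W i * ⟪x - m, U i⟫ := by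
    have : ⟪x - m, ∑ i, W i • U i⟫ = ∑ i, W i * ⟪x - m, U i⟫ := by
      rw [inner_sum]
      exact Finset.sum_congr rfl fun i _ => real_inner_smul_right _ _ _
    rw [← this, hsum0, inner_zero_right]
  have hlt : ∑ i, W i * ⟪x - m, U i⟫ < ∑ i, W i * (-r) := by
    apply Finset.sum_lt_sum
    · intro i _
      exact mul_le_mul_of_nonneg_left (hlb i).le (hW0 i)
    · exact ⟨i0, Finset.mem_univ i0, mul_lt_mul_of_pos_left (hlb i0) hi0⟩
  rw [← Finset.sum_mul, hW1, one_mul] at hlt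
  linarith
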